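/- Let C̃ be obtained from a CSS code C by the full X-type generator splitting procedure, and let ε > 0. If C is ε-X-sound, then C̃ is ε-X-sound. -/

import Mathlib

open Matrix

/-- The weight of a vector over `F₂`: the number of nonzero entries. -/
def wt {α : Type*} [Fintype α] (v : α → ZMod 2) : ℕ :=
  (Finset.univ.filter fun j => v j ≠ 0).card

/-- Maximum weight of a row of a matrix over `F₂`. -/
def maxRowW {m α : Type*} [Fintype m] [Fintype α] (M : Matrix m α (ZMod 2)) : ℕ :=
  Finset.univ.sup fun i => wt (M i)

/-- Maximum weight of a column of a matrix over `F₂`. -/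
def maxColW {m α : Type*} [Fintype m] [Fintype α] (M : Matrix m α (ZMod 2)) : ℕ :=
  Finset.univ.sup fun j => wt fun i => M i j

/-- Total number of nonzero entries of a matrix over `F₂`. -/
def totW {m α : Type*} [Fintype m] [Fintype α] (M : Matrix m α (ZMod 2)) : ℕ :=
  ∑ i, wt (M i)

variable {N nX nZ : ℕ}

/-- Qubits of the code obtained by the full X-type generator splitting procedure:
the original `N` qubits, plus, for each row of `HX` of weight `w ≥ 4` (a "heavy" row),
cut qubits `(1),…,(w−3)` (0-indexed below). -/
abbrev SplitQ (HX : Matrix (Fin nX) (Fin N) (ZMod 2)) : Type :=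
  Fin N ⊕ Σ i : {i : Fin nX // 4 ≤ wt (HX i)}, Fin (wt (HX i.1) - 3)

/-- X-type generators of the fully split code: the rows of `HX` of weight `≤ 3`,
plus, for each heavy row, the `w−2` rows created by splitting it. -/
abbrev SplitXIdx (HX : Matrix (Fin nX) (Fin N) (ZMod 2)) : Type :=
  {i : Fin nX // ¬ 4 ≤ wt (HX i)} ⊕ Σ i : {i : Fin nX // 4 ≤ wt (HX i)}, Fin (wt (HX i.1) - 2)

/-- X-type generator matrix of the code `C̃` obtained from `C` by applying the X-type
generator splitting step once to each row of `HX` of weight at least 4 (the result is the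
same in any order).  Here `q i` enumerates, in a fixed order, the support of the heavy
row `i`.  Splitting a heavy row with support `{q₁,…,q_w}` produces `w−2` rows with
supports `{q₁,q₂,(1)}`, `{(m),q_{m+2},(m+1)}` for `m = 1,…,w−4`, and `{(w−3),q_{w−1},q_w}`,
on the original qubits together with that row's own cut qubits. -/
def splitHX (HX : Matrix (Fin nX) (Fin N) (ZMod 2))
    (q : ∀ i : {i : Fin nX // 4 ≤ wt (HX i)}, Fin (wt (HX i.1)) → Fin N) :
    Matrix (SplitXIdx HX) (SplitQ HX) (ZMod 2) := fun r j =>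
  match r, j with
  | Sum.inl i, Sum.inl p => HX i.1 p
  | Sum.inl _, Sum.inr _ => 0
  | Sum.inr ⟨i, r⟩, Sum.inl p =>
      have hw : 4 ≤ wt (HX i.1) := i.2
      if (r.val = 0 ∧ (p = q i ⟨0, by omega⟩ ∨ p = q i ⟨1, by omega⟩)) ∨
         (1 ≤ r.val ∧ r.val ≤ wt (HX i.1) - 4 ∧
           p = q i ⟨r.val + 1, by have := r.isLt; omega⟩) ∨
         (r.val = wt (HX i.1) - 3 ∧
           (p = q i ⟨wt (HX i.1) - 2, by omega⟩ ∨ p = q i ⟨wt (HX i.1) - 1, by omega⟩))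
      then 1 else 0
  | Sum.inr ⟨i, r⟩, Sum.inr ⟨i', c⟩ =>
      if i' = i ∧ (c.val = r.val ∨ c.val + 1 = r.val) then 1 else 0

/-- Z-type generator matrix of the code `C̃` obtained from `C` by the full X-type generator
splitting procedure: each row `R` of `HZ` agrees with `R` on the original qubits, and its
entry at the cut qubit `(m)` of heavy row `i` is the parity of
`|supp(R) ∩ {q_{i,1},…,q_{i,m+1}}|`. -/
def splitHZ (HX : Matrix (Fin nX) (Fin N) (ZMod 2)) (HZ : Matrix (Fin nZ) (Fin N) (ZMod 2))
    (q : ∀ i : {i : Fin nX // 4 ≤ wt (HX i)}, Fin (wt (HX i.1)) → Fin N) :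
    Matrix (Fin nZ) (SplitQ HX) (ZMod 2) := fun R j =>
  match j with
  | Sum.inl p => HZ R p
  | Sum.inr ⟨i, m⟩ => ∑ a : Fin (wt (HX i.1)), if a.val ≤ m.val + 1 then HZ R (q i a) else 0

/-- A CSS code (given by its Z-type generator matrix `HZ`) is `ε`-X-sound if for every
`v` with `H_Z·v ≠ 0` there exists `u ∈ ker(H_Z)` with `wt(H_Z·v) ≥ ε·wt(v+u)`. -/
def XSound {m α : Type*} [Fintype m] [Fintype α] (ε : ℝ) (HZ : Matrix m α (ZMod 2)) : Prop :=
  ∀ v : α → ZMod 2, HZ.mulVec v ≠ 0 →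
    ∃ u : α → ZMod 2, HZ.mulVec u = 0 ∧ ε * (wt (v + u) : ℝ) ≤ (wt (HZ.mulVec v) : ℝ)

/-- If `C` is `ε`-X-sound, then the code `C̃` obtained from `C` by the
full X-type generator splitting procedure is `ε`-X-sound. -/
theorem stmt16 (HX : Matrix (Fin nX) (Fin N) (ZMod 2)) (HZ : Matrix (Fin nZ) (Fin N) (ZMod 2))
    (hCSS : HX * HZ.transpose = 0)
    (q : ∀ i : {i : Fin nX // 4 ≤ wt (HX i)}, Fin (wt (HX i.1)) → Fin N)
    (hinj : ∀ i, Function.Injective (q i))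
    (hrange : ∀ i p, HX i.1 p ≠ 0 ↔ p ∈ Set.range (q i))
    (ε : ℝ) (hε : 0 < ε) (hsound : XSound ε HZ) :
    XSound ε (splitHZ HX HZ q) := by
  classical
  intro v hv
  -- The "unfolding" matrix: cut qubit (i,m) maps to the sum of the first m+2 support qubits.
  set E : Matrix (SplitQ HX) (Fin N) (ZMod 2) := fun j p =>
    Sum.elim (fun p' => if p' = p then (1:ZMod 2) else 0)
      (fun im => ∑ a : Fin (wt (HX im.1.1)),
        if a.val ≤ im.2.val + 1 ∧ q im.1 a = p then 1 else 0) j with hE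
  have hfact : splitHZ HX HZ q = HZ * E.transpose := by
    ext R j
    cases j with
    | inl p =>
      simp only [splitHZ, Matrix.mul_apply, Matrix.transpose_apply]
      simp only [hE, Sum.elim_inl, mul_ite, mul_one, mul_zero]
      simp
    | inr im =>
      obtain ⟨i, m⟩ := im
      simp only [splitHZ, Matrix.mul_apply, Matrix.transpose_apply]
      simp only [hE, Sum.elim_inr, Finset.mul_sum]
      rw [Finset.sum_comm]
      apply Finset.sum_congr rfl
      intro a _
      by_cases h : a.val ≤ m.val + 1
      · simp only [h, true_and, mul_ite, mul_one, mul_zero]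
        simp
      · simp [h]
  set v' : Fin N → ZMod 2 := E.transpose.mulVec v with hv'def
  have hkey : (splitHZ HX HZ q).mulVec v = HZ.mulVec v' := by
    rw [hfact, hv'def, Matrix.mulVec_mulVec]
  have hι : ∀ w : Fin N → ZMod 2,
      (splitHZ HX HZ q).mulVec (Sum.elim w 0) = HZ.mulVec w := by
    intro w
    funext R
    simp only [Matrix.mulVec, dotProduct]
    rw [Fintype.sum_sum_type]
    simp [splitHZ]
  have hwt : ∀ w : Fin N → ZMod 2,
      wt (Sum.elim w (0 : (Σ i : {i : Fin nX // 4 ≤ wt (HX i)}, Fin (wt (HX i.1) - 3)) → ZMod 2))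
        = wt w := by
    intro w
    unfold wt
    rw [Finset.card_filter, Finset.card_filter, Fintype.sum_sum_type]
    simp
    exact Finset.sum_congr rfl fun x _ => by split_ifs <;> simp_all
  obtain ⟨u', hu'0, hu'w⟩ := hsound v' (by rw [← hkey]; exact hv)
  have h2 : ∀ a b : ZMod 2, a + (a + b) = b := by decide
  refine ⟨v + Sum.elim (v' + u') 0, ?_, ?_⟩
  · rw [Matrix.mulVec_add, hι, Matrix.mulVec_add, hu'0, hkey]
    funext R
    simp only [Pi.add_apply, Pi.zero_apply, add_zero]
    have := h2 (HZ.mulVec v' R) 0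
    simpa using this
  · have hvu : v + (v + Sum.elim (v' + u') 0) = Sum.elim (v' + u') 0 := by
      funext j
      simp only [Pi.add_apply]
      exact h2 _ _
    rw [hvu, hwt, hkey]
    exact hu'w
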